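/- Let A = λI + μθ with λ ≠ 0, θ the matrix with rows (0,-1),(1,0), η ∈ ℝ² nonzero, and v(u) = -u(A - uθ)⁻¹η. Then the derivative v'(u) is nonzero for every u (with λ²+(μ-u)² ≠ 0), i.e. v'(u) = 0 would force η = 0. -/

import Mathlib

noncomputable section
open Real Matrix

def toV (x : Fin 2 → ℝ) : EuclideanSpace ℝ (Fin 2) := WithLp.toLp 2 x

def th : Matrix (Fin 2) (Fin 2) ℝ := !![0, -1; 1, 0]

/-- Let `A = λI + μθ` with `λ ≠ 0` and `η ≠ 0`, and `v(u) = -u(A - uθ)⁻¹η`. Then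
`v'(u) ≠ 0` for every `u` (with `λ² + (μ-u)² ≠ 0`). -/
theorem stmt12 (lam mu : ℝ) (hlam : lam ≠ 0) (eta : Fin 2 → ℝ) (heta : eta ≠ 0)
    (A : Matrix (Fin 2) (Fin 2) ℝ)
    (hA : A = lam • (1 : Matrix (Fin 2) (Fin 2) ℝ) + mu • th)
    (u : ℝ) (hu : lam ^ 2 + (mu - u) ^ 2 ≠ 0) :
    deriv (fun u' : ℝ => toV ((-u') • ((A - u' • th)⁻¹.mulVec eta))) u ≠ 0 := by
  set a := eta 0 with ha_def
  set b := eta 1 with hb_def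
  set K : ℝ := lam ^ 2 + (mu - u) ^ 2 with hK
  set w : ℝ := mu - u with hw
  -- explicit componentwise form of the map
  have hfun : (fun u' : ℝ => toV ((-u') • ((A - u' • th)⁻¹.mulVec eta)))
      = fun u' => toV ![ -u' * ((lam^2+(mu-u')^2)⁻¹ * (lam * a + (mu - u') * b)),
                         -u' * ((lam^2+(mu-u')^2)⁻¹ * ((u' - mu) * a + lam * b))] := by
    funext u'
    unfold toV
    have hM : A - u' • th = !![lam, u' - mu; mu - u', lam] := by
      subst hA; ext i j; fin_cases i <;> fin_cases j <;> simp [th] <;> ring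
    rw [hM, Matrix.inv_def]
    congr 1
    funext i
    fin_cases i <;>
      simp [Matrix.det_fin_two, Matrix.adjugate_fin_two, Matrix.mulVec, dotProduct,
        Fin.sum_univ_two, Ring.inverse_eq_inv'] <;>
      (left; rw [show (lam*lam - (u'-mu)*(mu-u')) = lam^2+(mu-u')^2 from by ring]; ring)
  -- derivatives of the components
  set D0 : ℝ := (-1) * (K⁻¹ * (lam * a + w * b)) +
      (-u) * (-(2 * w * -1) / K ^ 2 * (lam * a + w * b) + K⁻¹ * (-b)) with hD0
  set D1 : ℝ := (-1) * (K⁻¹ * (-w * a + lam * b)) +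
      (-u) * (-(2 * w * -1) / K ^ 2 * (-w * a + lam * b) + K⁻¹ * a) with hD1
  have hDen : HasDerivAt (fun u' : ℝ => lam ^ 2 + (mu - u') ^ 2) (2 * w * -1) u := by
    have h1 : HasDerivAt (fun u' : ℝ => mu - u') (-1) u := by
      simpa using (hasDerivAt_id u).const_sub mu
    simpa using ((h1.pow 2).const_add (lam ^ 2))
  have hInv : HasDerivAt (fun u' : ℝ => (lam ^ 2 + (mu - u') ^ 2)⁻¹)
      (-(2 * w * -1) / K ^ 2) u := hDen.inv hu
  have hNeg : HasDerivAt (fun u' : ℝ => -u') (-1) u := (hasDerivAt_id u).neg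
  have hH0 : HasDerivAt (fun u' : ℝ =>
      -u' * ((lam^2+(mu-u')^2)⁻¹ * (lam * a + (mu - u') * b))) D0 u := by
    have hin : HasDerivAt (fun u' : ℝ => lam * a + (mu - u') * b) (-b) u := by
      have h1 : HasDerivAt (fun u' : ℝ => mu - u') (-1) u := by
        simpa using (hasDerivAt_id u).const_sub mu
      simpa using ((h1.mul_const b).const_add (lam * a))
    exact hNeg.mul (hInv.mul hin)
  have hH1 : HasDerivAt (fun u' : ℝ =>
      -u' * ((lam^2+(mu-u')^2)⁻¹ * ((u' - mu) * a + lam * b))) D1 u := by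
    have hin : HasDerivAt (fun u' : ℝ => (u' - mu) * a + lam * b) a u := by
      have h1 : HasDerivAt (fun u' : ℝ => u' - mu) 1 u := (hasDerivAt_id u).sub_const mu
      simpa [hw] using ((h1.mul_const a).add_const (lam * b))
    have := hNeg.mul (hInv.mul hin)
    simpa [hD1, hw, hK, Pi.mul_def] using this
  -- combine into a derivative of the vector-valued map
  have hpi : HasDerivAt (fun u' : ℝ =>
      (fun i => ![ -u' * ((lam^2+(mu-u')^2)⁻¹ * (lam * a + (mu - u') * b)),
                   -u' * ((lam^2+(mu-u')^2)⁻¹ * ((u' - mu) * a + lam * b))] i : Fin 2 → ℝ))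
      ![D0, D1] u := by
    rw [hasDerivAt_pi]
    intro i
    fin_cases i
    · simpa using hH0
    · simpa using hH1
  have hL : HasDerivAt (fun u' : ℝ =>
      toV ![ -u' * ((lam^2+(mu-u')^2)⁻¹ * (lam * a + (mu - u') * b)),
             -u' * ((lam^2+(mu-u')^2)⁻¹ * ((u' - mu) * a + lam * b))])
      (toV ![D0, D1]) u := by
    exact ((EuclideanSpace.equiv (Fin 2) ℝ).symm.toContinuousLinearMap.hasFDerivAt).comp_hasDerivAt u hpi
  have hderiv : deriv (fun u' : ℝ => toV ((-u') • ((A - u' • th)⁻¹.mulVec eta))) u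
      = toV ![D0, D1] := by
    rw [hfun]; exact hL.deriv
  rw [hderiv]
  -- now the algebra: assume the derivative vanishes
  intro hzero
  have h0 : D0 = 0 := by
    have := congrFun (congrArg (fun v : EuclideanSpace ℝ (Fin 2) => (v : Fin 2 → ℝ)) hzero) 0
    simpa [toV] using this
  have h1 : D1 = 0 := by
    have := congrFun (congrArg (fun v : EuclideanSpace ℝ (Fin 2) => (v : Fin 2 → ℝ)) hzero) 1
    simpa [toV] using this
  obtain ⟨s, hs_def⟩ : ∃ s : ℝ, s = K + 2 * u * w := ⟨_, rfl⟩
  obtain ⟨t, ht_def⟩ : ∃ t : ℝ, t = u * K - s * w := ⟨_, rfl⟩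
  have eq1 : -(s * lam * a) + t * b = 0 := by
    rw [hD0] at h0
    field_simp at h0
    have h0' : K ^ 2 * (-(s * lam * a) + t * b) = 0 := by
      rw [hK, hw] at h0; rw [ht_def, hs_def, hK, hw]; linear_combination (lam ^ 2 + (mu - u) ^ 2) ^ 2 * h0
    exact (mul_eq_zero.1 h0').resolve_left (pow_ne_zero 2 hu)
  have eq2 : -(t * a) - s * lam * b = 0 := by
    rw [hD1] at h1
    field_simp at h1
    have h1' : K ^ 2 * (-(t * a) - s * lam * b) = 0 := by
      rw [hK, hw] at h1; rw [ht_def, hs_def, hK, hw]; linear_combination (lam ^ 2 + (mu - u) ^ 2) ^ 2 * h1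
    exact (mul_eq_zero.1 h1').resolve_left (pow_ne_zero 2 hu)
  clear_value D0 D1 K w
  clear hfun hpi hL hderiv hH0 hH1 hDen hInv hNeg hzero h0 h1 hD0 hD1 D0 D1 hA A
  have hst : s ^ 2 * lam ^ 2 + t ^ 2 ≠ 0 := by
    intro h
    have hsq : (s * lam) ^ 2 + t ^ 2 = 0 := by linear_combination h
    have hs0 : s * lam = 0 := by
      have : (s * lam) ^ 2 = 0 := by nlinarith [sq_nonneg (s * lam), sq_nonneg t]
      exact pow_eq_zero_iff (two_ne_zero) |>.1 this
    have ht0 : t = 0 := by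
      have : t ^ 2 = 0 := by nlinarith [sq_nonneg (s * lam), sq_nonneg t]
      exact pow_eq_zero_iff (two_ne_zero) |>.1 this
    have hs0' : s = 0 := by
      rcases mul_eq_zero.1 hs0 with h' | h'
      · exact h'
      · exact absurd h' hlam
    -- s = lam^2 + mu^2 - u^2 and t reduces to 2u^2(u - mu)
    have hsval : lam ^ 2 + mu ^ 2 - u ^ 2 = 0 := by
      have : s = lam ^ 2 + mu ^ 2 - u ^ 2 := by rw [hs_def, hK, hw]; ring
      linarith [this ▸ hs0']
    have key : 2 * u ^ 2 * (u - mu) = 0 := by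
      have htval : t = lam ^ 2 * (2 * u - mu) - (mu - u) ^ 2 * mu := by
        rw [ht_def, hs_def, hK, hw]; ring
      have ht0' : lam ^ 2 * (2 * u - mu) - (mu - u) ^ 2 * mu = 0 := htval ▸ ht0
      linear_combination ht0' - (2 * u - mu) * hsval
    have hlam2 : 0 < lam ^ 2 := by positivity
    rcases mul_eq_zero.1 key with h' | h'
    · have : u = 0 := by
        have : u ^ 2 = 0 := by linarith [mul_eq_zero.1 h']; 
        exact pow_eq_zero_iff (n := 2) (by norm_num) |>.1 this
      nlinarith [sq_nonneg mu]
    · have : u = mu := by linarith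
      nlinarith [sq_nonneg mu]
  have ha : a = 0 := by
    have key : (s ^ 2 * lam ^ 2 + t ^ 2) * a = 0 := by
      linear_combination (-(s * lam)) * eq1 + (-t) * eq2
    exact (mul_eq_zero.1 key).resolve_left hst
  have hb : b = 0 := by
    have key : (s ^ 2 * lam ^ 2 + t ^ 2) * b = 0 := by
      linear_combination t * eq1 + (-(s * lam)) * eq2
    exact (mul_eq_zero.1 key).resolve_left hst
  apply heta
  funext i
  fin_cases i
  · exact ha
  · exact hb
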